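/- Let $(L_\varepsilon)$ be a family of $k$-dimensional vector subspaces of $\mathbb{C}^d$. If the dimension of $\liminf_{\varepsilon \to 0} L_\varepsilon$ equals $k$, then $\liminf_{\varepsilon \to 0} L_\varepsilon = \limsup_{\varepsilon \to 0} L_\varepsilon$. -/

import Mathlib

open Filter Metric

/-- `K ε = L ε ∩ closed unit ball`. -/
def subspaceBall {d : ℕ} (L : ℂ → Submodule ℂ (EuclideanSpace ℂ (Fin d))) (ε : ℂ) :
    Set (EuclideanSpace ℂ (Fin d)) :=
  (L ε : Set (EuclideanSpace ℂ (Fin d))) ∩ Metric.closedBall 0 1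

/-- Hausdorff-type lower limit of the sets `K ε` as `ε → 0`. -/
def liminfBall {d : ℕ} (L : ℂ → Submodule ℂ (EuclideanSpace ℂ (Fin d))) :
    Set (EuclideanSpace ℂ (Fin d)) :=
  {x | ∃ u : ℂ → EuclideanSpace ℂ (Fin d),
    (∀ ε, u ε ∈ subspaceBall L ε) ∧ Tendsto u (nhdsWithin (0 : ℂ) {0}ᶜ) (nhds x)}

/-- Hausdorff-type upper limit of the sets `K ε` as `ε → 0`. -/
def limsupBall {d : ℕ} (L : ℂ → Submodule ℂ (EuclideanSpace ℂ (Fin d))) :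
    Set (EuclideanSpace ℂ (Fin d)) :=
  {x | ∃ (εs : ℕ → ℂ) (xs : ℕ → EuclideanSpace ℂ (Fin d)),
    Tendsto εs atTop (nhdsWithin (0 : ℂ) {0}ᶜ) ∧
    (∀ n, xs n ∈ subspaceBall L (εs n)) ∧ Tendsto xs atTop (nhds x)}

/-- Lower limit of the family of subspaces. -/
noncomputable def liminfSubspace {d : ℕ} (L : ℂ → Submodule ℂ (EuclideanSpace ℂ (Fin d))) :
    Submodule ℂ (EuclideanSpace ℂ (Fin d)) :=
  Submodule.span ℂ (liminfBall L)

/-- Upper limit of the family of subspaces. -/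
noncomputable def limsupSubspace {d : ℕ} (L : ℂ → Submodule ℂ (EuclideanSpace ℂ (Fin d))) :
    Submodule ℂ (EuclideanSpace ℂ (Fin d)) :=
  Submodule.span ℂ (limsupBall L)

lemma approx_of_mem_liminfSubspace {d : ℕ} {L : ℂ → Submodule ℂ (EuclideanSpace ℂ (Fin d))}
    {v : EuclideanSpace ℂ (Fin d)} (hv : v ∈ liminfSubspace L) :
    ∃ u : ℂ → EuclideanSpace ℂ (Fin d), (∀ ε, u ε ∈ L ε) ∧
      Tendsto u (nhdsWithin (0 : ℂ) {0}ᶜ) (nhds v) := by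
  induction hv using Submodule.span_induction with
  | mem x hx =>
      obtain ⟨u, hu, ht⟩ := hx
      exact ⟨u, fun ε => (hu ε).1, ht⟩
  | zero => exact ⟨fun _ => 0, fun ε => (L ε).zero_mem, tendsto_const_nhds⟩
  | add x y hx hy ihx ihy =>
      obtain ⟨u, hu, htu⟩ := ihx; obtain ⟨w, hw, htw⟩ := ihy
      exact ⟨fun ε => u ε + w ε, fun ε => (L ε).add_mem (hu ε) (hw ε), htu.add htw⟩
  | smul a x hx ihx =>
      obtain ⟨u, hu, htu⟩ := ihx
      exact ⟨fun ε => a • u ε, fun ε => (L ε).smul_mem a (hu ε), htu.const_smul a⟩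

lemma liminfBall_subset_limsupBall {d : ℕ} {L : ℂ → Submodule ℂ (EuclideanSpace ℂ (Fin d))} :
    liminfBall L ⊆ limsupBall L := by
  rintro x ⟨u, hu, ht⟩
  have hεs : Tendsto (fun n : ℕ => ((((n : ℝ) + 1)⁻¹ : ℝ) : ℂ)) atTop
      (nhdsWithin (0 : ℂ) {0}ᶜ) := by
    rw [tendsto_nhdsWithin_iff]
    constructor
    · have h1 : Tendsto (fun n : ℕ => ((n : ℝ) + 1)⁻¹) atTop (nhds 0) := by
        simpa [one_div] using tendsto_one_div_add_atTop_nhds_zero_nat (𝕜 := ℝ)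
      have h2 := (Complex.continuous_ofReal.tendsto 0).comp h1
      rw [Complex.ofReal_zero] at h2
      exact h2
    · filter_upwards with n
      simp only [Set.mem_compl_iff, Set.mem_singleton_iff]
      exact_mod_cast inv_ne_zero (by positivity : ((n : ℝ) + 1) ≠ 0)
  exact ⟨_, _, hεs, fun n => hu _, ht.comp hεs⟩

set_option maxHeartbeats 1000000 in
lemma limsupBall_subset_liminfSubspace {d k : ℕ}
    {L : ℂ → Submodule ℂ (EuclideanSpace ℂ (Fin d))}
    (hdim : ∀ ε : ℂ, Module.finrank ℂ (L ε) = k)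
    (h : Module.finrank ℂ (liminfSubspace L) = k) :
    limsupBall L ⊆ (liminfSubspace L : Set (EuclideanSpace ℂ (Fin d))) := by
  rintro x ⟨εs, xs, hεs, hxs, hxt⟩
  let b : Module.Basis (Fin k) ℂ (liminfSubspace L) := Module.finBasisOfFinrankEq ℂ _ h
  set v : Fin k → EuclideanSpace ℂ (Fin d) := fun j => (b j : EuclideanSpace ℂ (Fin d)) with hv
  have hvmem : ∀ j, v j ∈ liminfSubspace L := fun j => (b j).2
  have hli : LinearIndependent ℂ v :=
    b.linearIndependent.map' (liminfSubspace L).subtype (Submodule.ker_subtype _)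
  choose u hu htu using fun j => approx_of_mem_liminfSubspace (hvmem j)
  set w : Fin k → ℕ → EuclideanSpace ℂ (Fin d) := fun j n => u j (εs n) with hw
  have hwt : ∀ j, Tendsto (fun n => w j n) atTop (nhds (v j)) := fun j => (htu j).comp hεs
  set δ : ℕ → ℝ := fun n => ∑ j, ‖w j n - v j‖ with hδdef
  have hδ0 : ∀ n, 0 ≤ δ n := fun n => Finset.sum_nonneg fun j _ => norm_nonneg _
  have hδ : Tendsto δ atTop (nhds 0) := by
    have : Tendsto δ atTop (nhds (∑ j : Fin k, (0:ℝ))) :=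
      tendsto_finset_sum _ fun j _ => by
        simpa using (tendsto_sub_nhds_zero_iff.mpr (hwt j)).norm
    simpa using this
  let T : (Fin k → ℂ) →ₗ[ℂ] EuclideanSpace ℂ (Fin d) := Fintype.linearCombination ℂ v
  let Tn : ℕ → ((Fin k → ℂ) →ₗ[ℂ] EuclideanSpace ℂ (Fin d)) :=
    fun n => Fintype.linearCombination ℂ (fun j => w j n)
  have hTker : LinearMap.ker T = ⊥ := by
    rw [LinearMap.ker_eq_bot']
    intro m hm
    have := Fintype.linearIndependent_iff.mp hli m (by simpa [T, Fintype.linearCombination_apply] using hm)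
    funext j; exact this j
  obtain ⟨K, hK0, hK⟩ := T.exists_antilipschitzWith hTker
  have hKpos : (0:ℝ) < (K:ℝ) := hK0
  have hTlow : ∀ c : Fin k → ℂ, ‖c‖ ≤ K * ‖T c‖ := by
    intro c
    have := hK.le_mul_dist c 0
    simpa [dist_zero_right, map_zero] using this
  have key : ∀ (n : ℕ) (c : Fin k → ℂ), ‖Tn n c - T c‖ ≤ δ n * ‖c‖ := by
    intro n c
    have heq : Tn n c - T c = ∑ j, c j • (w j n - v j) := by
      simp [Tn, T, Fintype.linearCombination_apply, smul_sub, Finset.sum_sub_distrib]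
    rw [heq]
    calc ‖∑ j, c j • (w j n - v j)‖ ≤ ∑ j, ‖c j • (w j n - v j)‖ := norm_sum_le _ _
      _ ≤ ∑ j, ‖w j n - v j‖ * ‖c‖ := by
          refine Finset.sum_le_sum fun j _ => ?_
          rw [norm_smul, mul_comm]
          exact mul_le_mul_of_nonneg_left (norm_le_pi_norm c j) (norm_nonneg _)
      _ = δ n * ‖c‖ := by rw [hδdef, Finset.sum_mul]
  obtain ⟨N, hN⟩ := eventually_atTop.mp (hδ.eventually (gt_mem_nhds (by positivity : (0:ℝ) < (2*K)⁻¹)))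
  have lower : ∀ n, N ≤ n → ∀ c : Fin k → ℂ, ‖c‖ ≤ 2 * K * ‖Tn n c‖ := by
    intro n hn c
    have h1 : ‖T c‖ ≤ ‖Tn n c‖ + (2*K)⁻¹ * ‖c‖ := by
      have := norm_sub_norm_le (Tn n c) (T c)
      have h2 : ‖Tn n c - T c‖ ≤ (2*K)⁻¹ * ‖c‖ :=
        le_trans (key n c) (mul_le_mul_of_nonneg_right (le_of_lt (hN n hn)) (norm_nonneg _))
      have h3 := norm_le_insert' (Tn n c) (T c)
      calc ‖T c‖ ≤ ‖Tn n c‖ + ‖T c - Tn n c‖ := by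
            have := norm_add_le (Tn n c) (T c - Tn n c); simpa using this
        _ ≤ ‖Tn n c‖ + (2*K)⁻¹ * ‖c‖ := by
            rw [← norm_neg (T c - Tn n c)]; simp only [neg_sub]
            exact add_le_add_right h2 _
    have h4 := hTlow c
    have hKr : (K:ℝ) * (2*K)⁻¹ = 1/2 := by push_cast; rw [mul_inv, ← mul_assoc, mul_comm (K:ℝ), mul_assoc, mul_inv_cancel₀ hKpos.ne', mul_one, one_div]
    nlinarith [norm_nonneg c, norm_nonneg (Tn n c)]
  have hrange : ∀ n, N ≤ n → LinearMap.range (Tn n) = L (εs n) := by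
    intro n hn
    have hinj : LinearMap.ker (Tn n) = ⊥ := by
      rw [LinearMap.ker_eq_bot']
      intro m hm
      have := lower n hn m
      rw [hm] at this
      have h0 : ‖m‖ ≤ 0 := by simpa using this
      exact norm_le_zero_iff.mp h0
    refine Submodule.eq_of_le_of_finrank_le ?_ ?_
    · rw [Fintype.range_linearCombination]
      rw [Submodule.span_le]
      rintro _ ⟨j, rfl⟩
      exact hu j (εs n)
    · rw [hdim (εs n)]
      rw [LinearMap.finrank_range_of_inj (LinearMap.ker_eq_bot.mp hinj)]
      simp
  have hex : ∀ n, ∃ c : Fin k → ℂ, ‖c‖ ≤ 2 * K ∧ (N ≤ n → Tn n c = xs n) := by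
    intro n
    by_cases hn : N ≤ n
    · have hmem : xs n ∈ LinearMap.range (Tn n) := by
        rw [hrange n hn]; exact (hxs n).1
      obtain ⟨c, hc⟩ := hmem
      refine ⟨c, ?_, fun _ => hc⟩
      have h1 := lower n hn c
      rw [hc] at h1
      have h2 : ‖xs n‖ ≤ 1 := by
        have := (hxs n).2; rwa [mem_closedBall_zero_iff] at this
      calc ‖c‖ ≤ 2*K*‖xs n‖ := h1
        _ ≤ 2*K*1 := by nlinarith
        _ = 2*K := by ring
    · refine ⟨0, ?_, fun hc => absurd hc hn⟩
      simp only [norm_zero]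
      positivity
  choose c hcb hceq using hex
  have hbdd : ∀ n, c n ∈ Metric.closedBall (0 : Fin k → ℂ) (2*K) := by
    intro n; rw [mem_closedBall_zero_iff]; exact hcb n
  obtain ⟨cl, _, φ, hφ, hcφ⟩ := tendsto_subseq_of_bounded isBounded_closedBall hbdd
  have hTc : Tendsto (fun m => T (c (φ m))) atTop (nhds (T cl)) :=
    (T.continuous_of_finiteDimensional.tendsto _).comp hcφ
  have hdiff : Tendsto (fun m => Tn (φ m) (c (φ m)) - T (c (φ m))) atTop (nhds 0) := by
    apply squeeze_zero_norm (a := fun m => δ (φ m) * (2*K))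
    · intro m
      calc ‖Tn (φ m) (c (φ m)) - T (c (φ m))‖ ≤ δ (φ m) * ‖c (φ m)‖ := key _ _
        _ ≤ δ (φ m) * (2*K) := mul_le_mul_of_nonneg_left (hcb _) (hδ0 _)
    · simpa using (hδ.comp hφ.tendsto_atTop).mul_const (2*(K:ℝ))
  have hTn : Tendsto (fun m => Tn (φ m) (c (φ m))) atTop (nhds (T cl)) := by
    have := hdiff.add hTc
    simpa using this
  have hxsφ : Tendsto (fun m => xs (φ m)) atTop (nhds x) := hxt.comp hφ.tendsto_atTop
  have hxeq : x = T cl := by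
    refine tendsto_nhds_unique hxsφ (hTn.congr' ?_)
    filter_upwards [eventually_ge_atTop N] with m hm
    exact hceq (φ m) (le_trans hm (hφ.le_apply))
  rw [hxeq]
  have hmem : T cl ∈ LinearMap.range T := LinearMap.mem_range_self T cl
  rw [Fintype.range_linearCombination] at hmem
  exact Submodule.span_le.mpr (Set.range_subset_iff.mpr hvmem) hmem

/-- If `dim (limsup L_ε) = k`, then `liminf L_ε = limsup L_ε`. -/
theorem liminf_eq_limsup_of_finrank_liminf_eq
    (d k : ℕ) (L : ℂ → Submodule ℂ (EuclideanSpace ℂ (Fin d)))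
    (hdim : ∀ ε : ℂ, Module.finrank ℂ (L ε) = k)
    (h : Module.finrank ℂ (liminfSubspace L) = k) :
    liminfSubspace L = limsupSubspace L := by
  refine le_antisymm (Submodule.span_mono liminfBall_subset_limsupBall) ?_
  rw [limsupSubspace, Submodule.span_le]
  exact limsupBall_subset_liminfSubspace hdim h
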